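/- For every integer n ≥ 3 and every index i with 2 ≤ i ≤ n−1, substituting a_i = 0 into L_n gives the factorization L_n(a_1,…,a_{i−1},0,a_{i+1},…,a_n) = (1 + ∑_{j≠i} a_j) · L_{n−1}(a_1,…,a_{i−1},a_{i+1},…,a_n), where on the right-hand side L_{n−1} is formed on the n−1 remaining variables, with a_1 playing the role of the first variable and a_n the role of the last variable. -/

import Mathlib

/-- The polynomial `L_{n+2}(a_1,…,a_{n+2}) = ∑_{(I,J)} t(I,J)`, the sum over pairs
`(I,J)` of disjoint sets with union `{1,…,n+2}`, `1 ∈ I`, `n+2 ∈ J`, where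
`t(I,J) = a_1 a_I^{|I|−2} (1+a_J)^{|J|−1}` for `|I| ≥ 2` and
`t({1},J) = (1+a_J)^{n}` (the case `|I| = 1`). -/
def Lpoly (R : Type*) [CommRing R] (n : ℕ) (a : Fin (n + 2) → R) : R :=
  ∑ I ∈ Finset.univ.filter
      (fun I : Finset (Fin (n + 2)) => 0 ∈ I ∧ Fin.last (n + 1) ∉ I),
    if I.card = 1 then (1 + ∑ j ∈ Iᶜ, a j) ^ n
    else a 0 * (∑ i ∈ I, a i) ^ (I.card - 2) * (1 + ∑ j ∈ Iᶜ, a j) ^ (Iᶜ.card - 1)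

/-- Specializing an interior variable of `L` to zero factors it:
`L_n(a_1,…,0,…,a_n) = (1 + ∑_{j≠i} a_j) L_{n−1}(a_1,…,â_i,…,a_n)`, where the first
and last variables keep their roles. Here the total number of variables is `n + 3 ≥ 3`
and the interior index `i` satisfies `1 ≤ i ≤ n + 1` (`0`-indexed). -/
theorem stmt6 {R : Type*} [CommRing R] (n : ℕ) (a : Fin (n + 3) → R)
    (i : Fin (n + 3)) (h1 : 1 ≤ i.1) (h2 : i.1 ≤ n + 1) :
    Lpoly R (n + 1) (Function.update a i 0) =
      (1 + ∑ j ∈ Finset.univ.erase i, a j) * Lpoly R n (a ∘ i.succAbove) := by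
  classical
  set a' := Function.update a i 0 with ha'
  set ι : Fin (n + 2) → Fin (n + 3) := i.succAbove with hιdef
  have hinj : Function.Injective ι := Fin.succAbove_right_injective
  have hι0 : ι 0 = 0 := by
    have h : (0 : Fin (n+2)).castSucc < i := by
      simp only [Fin.lt_def, Fin.coe_castSucc, Fin.val_zero]; omega
    simpa using Fin.succAbove_of_castSucc_lt i 0 h
  have hιlast : ι (Fin.last (n+1)) = Fin.last (n+2) := by
    have h : i ≤ (Fin.last (n+1)).castSucc := by
      simp only [Fin.le_def, Fin.coe_castSucc, Fin.val_last]; omega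
    rw [hιdef, Fin.succAbove_of_le_castSucc i _ h]
    exact Fin.succ_last (n+1)
  have hne : ∀ k, ι k ≠ i := fun k => Fin.succAbove_ne i k
  have hi0 : i ≠ 0 := by intro h; rw [h] at h1; simp at h1
  have hilast : i ≠ Fin.last (n+2) := by
    intro h; rw [h] at h2; simp [Fin.val_last] at h2
  set emb : Fin (n+2) ↪ Fin (n+3) := ⟨ι, hinj⟩ with hembdef
  set e : Finset (Fin (n+2)) → Finset (Fin (n+3)) := fun s => s.map emb with hedef
  -- basic membership facts
  have hmem : ∀ (s : Finset (Fin (n+2))) (k : Fin (n+2)), ι k ∈ e s ↔ k ∈ s := by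
    intro s k
    simp [hedef, Finset.mem_map, hembdef, hinj.eq_iff]
  have hmem0 : ∀ s : Finset (Fin (n+2)), (0 : Fin (n+3)) ∈ e s ↔ 0 ∈ s := by
    intro s; rw [← hι0, hmem]
  have hmemlast : ∀ s : Finset (Fin (n+2)), Fin.last (n+2) ∈ e s ↔ Fin.last (n+1) ∈ s := by
    intro s; rw [← hιlast, hmem]
  have hinotmem : ∀ s : Finset (Fin (n+2)), i ∉ e s := by
    intro s hs
    simp only [hedef, Finset.mem_map, hembdef] at hs
    obtain ⟨k, _, hk⟩ := hs
    exact hne k hk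
  have hcard : ∀ s : Finset (Fin (n+2)), (e s).card = s.card := fun s => Finset.card_map _
  have hcompl : ∀ s : Finset (Fin (n+2)), (e s)ᶜ = insert i (e sᶜ) := by
    intro s
    ext x
    rcases eq_or_ne x i with rfl | hx
    · simp [hinotmem s]
    · obtain ⟨k, rfl⟩ := Fin.exists_succAbove_eq hx
      simp [← hιdef, hmem, hne k]
  have hpre : ∀ s : Finset (Fin (n+2)), (e s).preimage ι hinj.injOn = s := by
    intro s; ext k; rw [Finset.mem_preimage, hmem]
  have hepre : ∀ t : Finset (Fin (n+3)), i ∉ t → e (t.preimage ι hinj.injOn) = t := by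
    intro t ht
    ext x
    rcases eq_or_ne x i with rfl | hx
    · simp [hinotmem, ht]
    · obtain ⟨k, rfl⟩ := Fin.exists_succAbove_eq hx
      rw [hmem, Finset.mem_preimage]
  have hsum : ∀ s : Finset (Fin (n+2)), ∑ j ∈ e s, a' j = ∑ k ∈ s, a (ι k) := by
    intro s
    rw [hedef, Finset.sum_map]
    exact Finset.sum_congr rfl fun k _ => Function.update_of_ne (hne k) 0 a
  have hsumc : ∀ s : Finset (Fin (n+2)), ∑ j ∈ (e s)ᶜ, a' j = ∑ k ∈ sᶜ, a (ι k) := by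
    intro s
    rw [hcompl, Finset.sum_insert (hinotmem _), hsum]
    simp [ha']
  have hSS : ∑ j ∈ Finset.univ.erase i, a j = ∑ k : Fin (n+2), a (ι k) := by
    have huniv : (Finset.univ : Finset (Fin (n+2))).map emb = Finset.univ.erase i := by
      ext x
      simp only [Finset.mem_map, Finset.mem_erase, Finset.mem_univ, and_true, true_and]
      constructor
      · rintro ⟨k, -, rfl⟩; exact hne k
      · intro hx; obtain ⟨k, hk⟩ := Fin.exists_succAbove_eq hx
        exact ⟨k, hk⟩
    rw [← huniv, Finset.sum_map]
    rfl
  set S := ∑ j ∈ Finset.univ.erase i, a j with hSdef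
  set F : Finset (Fin (n+3)) → R := fun I =>
    if I.card = 1 then (1 + ∑ j ∈ Iᶜ, a' j) ^ (n+1)
    else a' 0 * (∑ j ∈ I, a' j) ^ (I.card - 2) * (1 + ∑ j ∈ Iᶜ, a' j) ^ (Iᶜ.card - 1)
    with hF
  set G : Finset (Fin (n+2)) → R := fun I =>
    if I.card = 1 then (1 + ∑ j ∈ Iᶜ, (a ∘ ι) j) ^ n
    else (a ∘ ι) 0 * (∑ j ∈ I, (a ∘ ι) j) ^ (I.card - 2) *
      (1 + ∑ j ∈ Iᶜ, (a ∘ ι) j) ^ (Iᶜ.card - 1)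
    with hG
  set Af := Finset.univ.filter
      (fun I : Finset (Fin (n+3)) => 0 ∈ I ∧ Fin.last (n+2) ∉ I) with hAf
  set Bf := Finset.univ.filter
      (fun I : Finset (Fin (n+2)) => 0 ∈ I ∧ Fin.last (n+1) ∉ I) with hBf
  show ∑ I ∈ Af, F I = (1 + S) * ∑ I' ∈ Bf, G I'
  -- membership in Bf
  have hBf_mem : ∀ s : Finset (Fin (n+2)), s ∈ Bf ↔ 0 ∈ s ∧ Fin.last (n+1) ∉ s := by
    intro s; rw [hBf]; simp
  have hAf_mem : ∀ s : Finset (Fin (n+3)), s ∈ Af ↔ 0 ∈ s ∧ Fin.last (n+2) ∉ s := by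
    intro s; rw [hAf]; simp
  -- two reindexing bijections
  have hright : ∀ I ∈ Af.filter (fun I => i ∈ I),
      insert i (e ((I.erase i).preimage ι hinj.injOn)) = I := by
    intro I hI
    rw [Finset.mem_filter] at hI
    rw [hepre _ (Finset.notMem_erase i I), Finset.insert_erase hI.2]
  have p1 : ∑ I ∈ Af.filter (fun I => i ∈ I), F I = ∑ I' ∈ Bf, F (insert i (e I')) := by
    refine Finset.sum_nbij' (i := fun I => (I.erase i).preimage ι hinj.injOn)
      (j := fun I' => insert i (e I')) ?_ ?_ ?_ ?_ ?_
    · intro I hI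
      rw [Finset.mem_filter, hAf_mem] at hI
      obtain ⟨⟨h0, hlst⟩, hiI⟩ := hI
      rw [hBf_mem]
      constructor
      · rw [Finset.mem_preimage, hι0]
        exact Finset.mem_erase.mpr ⟨Ne.symm hi0, h0⟩
      · rw [Finset.mem_preimage, hιlast]
        intro h; exact hlst (Finset.mem_of_mem_erase h)
    · intro I' hI'
      rw [hBf_mem] at hI'
      rw [Finset.mem_filter, hAf_mem]
      refine ⟨⟨Finset.mem_insert_of_mem ((hmem0 I').mpr hI'.1), ?_⟩,
        Finset.mem_insert_self i _⟩
      intro h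
      rcases Finset.mem_insert.mp h with h | h
      · exact hilast h.symm
      · exact hI'.2 ((hmemlast I').mp h)
    · exact hright
    · intro I' hI'
      rw [Finset.erase_insert (hinotmem I'), hpre]
    · intro I hI
      exact (congrArg F (hright I hI)).symm
  have p2 : ∑ I ∈ Af.filter (fun I => ¬ i ∈ I), F I = ∑ I' ∈ Bf, F (e I') := by
    refine Finset.sum_nbij' (i := fun I => I.preimage ι hinj.injOn) (j := e) ?_ ?_ ?_ ?_ ?_
    · intro I hI
      rw [Finset.mem_filter, hAf_mem] at hI
      obtain ⟨⟨h0, hlst⟩, hiI⟩ := hI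
      rw [hBf_mem]
      constructor
      · rw [Finset.mem_preimage, hι0]; exact h0
      · rw [Finset.mem_preimage, hιlast]; exact hlst
    · intro I' hI'
      rw [hBf_mem] at hI'
      rw [Finset.mem_filter, hAf_mem]
      exact ⟨⟨(hmem0 I').mpr hI'.1, fun h => hI'.2 ((hmemlast I').mp h)⟩, hinotmem I'⟩
    · intro I hI
      rw [Finset.mem_filter] at hI
      exact hepre I hI.2
    · intro I' _
      exact hpre I'
    · intro I hI
      rw [Finset.mem_filter] at hI
      exact (congrArg F (hepre I hI.2)).symm
  have key : ∀ I' ∈ Bf, F (insert i (e I')) + F (e I') = (1 + S) * G I' := by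
    intro I' hI'
    rw [hBf_mem] at hI'
    obtain ⟨h0, hlst⟩ := hI'
    have hk1 : 1 ≤ I'.card := Finset.card_pos.mpr ⟨0, h0⟩
    have hk2 : I'.card < n + 2 := by
      have hne' : I' ≠ Finset.univ := fun h => hlst (h ▸ Finset.mem_univ _)
      have := Finset.card_lt_card (Finset.ssubset_univ_iff.mpr hne')
      simpa [Finset.card_univ] using this
    set sI := ∑ x ∈ I', a (ι x) with hsIdef
    set sJ := ∑ x ∈ I'ᶜ, a (ι x) with hsJdef
    have hins_card : (insert i (e I')).card = I'.card + 1 := by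
      rw [Finset.card_insert_of_notMem (hinotmem _), hcard]
    have hins_sum : ∑ j ∈ insert i (e I'), a' j = sI := by
      rw [Finset.sum_insert (hinotmem _), hsum]
      simp [ha', hsIdef]
    have hins_compl : (insert i (e I'))ᶜ = e I'ᶜ := by
      rw [Finset.compl_insert, hcompl, Finset.erase_insert (hinotmem _)]
    have hins_csum : ∑ j ∈ (insert i (e I'))ᶜ, a' j = sJ := by
      rw [hins_compl, hsum]
    have hins_ccard : (insert i (e I'))ᶜ.card = n + 2 - I'.card := by
      rw [hins_compl, hcard, Finset.card_compl, Fintype.card_fin]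
    have he_ccard : (e I')ᶜ.card = n + 3 - I'.card := by
      rw [Finset.card_compl, hcard, Fintype.card_fin]
    have ha'0 : a' 0 = a 0 := Function.update_of_ne (Ne.symm hi0) 0 a
    have hG0 : (a ∘ ι) 0 = a 0 := by rw [Function.comp_apply, hι0]
    have hSsplit : S = sI + sJ := by
      rw [hSS, hsIdef, hsJdef]
      exact (Finset.sum_add_sum_compl I' _).symm
    have hsm_ccard : I'ᶜ.card = n + 2 - I'.card := by
      rw [Finset.card_compl, Fintype.card_fin]
    have hGsum : ∀ s : Finset (Fin (n+2)), ∑ j ∈ s, (a ∘ ι) j = ∑ j ∈ s, a (ι j) :=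
      fun s => rfl
    rw [hF, hG]
    simp only [hins_card, hins_sum, hins_csum, hins_ccard, hcard, hsum, hsumc,
      he_ccard, hsm_ccard, ha'0, hG0, hGsum, ← hsIdef, ← hsJdef, hSsplit]
    rcases eq_or_lt_of_le hk1 with h1' | h2'
    · -- card = 1, so I' = {0}
      have hcd : I'.card = 1 := h1'.symm
      have hI'eq : I' = {0} := by
        obtain ⟨x, hx⟩ := Finset.card_eq_one.mp hcd
        rw [hx] at h0 ⊢
        rw [Finset.mem_singleton] at h0
        rw [← h0]
      have hsI0 : sI = a 0 := by rw [hsIdef, hI'eq, Finset.sum_singleton, hι0]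
      rw [hcd, hsI0]
      have e2 : n + 2 - 1 - 1 = n := by omega
      rw [e2]
      norm_num [pow_succ]
      ring
    · have hcd2 : 2 ≤ I'.card := h2'
      rw [if_neg (by omega : ¬ (I'.card + 1 = 1)), if_neg (by omega : ¬ (I'.card = 1)),
        if_neg (by omega : ¬ (I'.card = 1))]
      have e1 : I'.card + 1 - 2 = (I'.card - 2) + 1 := by omega
      have e2 : n + 3 - I'.card - 1 = (n + 2 - I'.card - 1) + 1 := by omega
      rw [e1, e2, pow_succ, pow_succ]
      ring
  calc ∑ I ∈ Af, F I
      = ∑ I ∈ Af.filter (fun I => i ∈ I), F I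
        + ∑ I ∈ Af.filter (fun I => ¬ i ∈ I), F I :=
        (Finset.sum_filter_add_sum_filter_not Af (fun I => i ∈ I) F).symm
    _ = ∑ I' ∈ Bf, F (insert i (e I')) + ∑ I' ∈ Bf, F (e I') := by rw [p1, p2]
    _ = ∑ I' ∈ Bf, (F (insert i (e I')) + F (e I')) := Finset.sum_add_distrib.symm
    _ = ∑ I' ∈ Bf, (1 + S) * G I' := Finset.sum_congr rfl key
    _ = (1 + S) * ∑ I' ∈ Bf, G I' := by rw [Finset.mul_sum]
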